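/- Let k ≥ 2. Then the limit L_k = lim_{n→∞} M_k(n)/k^{2n} exists, and for every n ≥ 1 it satisfies (Σ_{i=1}^{n} u_i·k^{−2i})^2 ≤ L_k ≤ ((Σ_{i=1}^{n} u_i·k^{−2i}) + k^{−n}/(k−1))^2. -/

import Mathlib

open Classical Finset Filter

/-- A border of `w`: a non-empty word that is both a proper prefix and a suffix of `w`. -/
def IsBorder {k : ℕ} (w b : List (Fin k)) : Prop :=
  b ≠ [] ∧ b ≠ w ∧ b <+: w ∧ b <:+ w

/-- A word is unbordered if it has no border. -/
def Unbordered {k : ℕ} (w : List (Fin k)) : Prop :=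
  ∀ b, ¬ IsBorder w b

/-- A right-border of `(u,v)`: a non-empty proper suffix of `u` that is a proper prefix of `v`. -/
def IsRightBorder {k : ℕ} (u v b : List (Fin k)) : Prop :=
  b ≠ [] ∧ b <:+ u ∧ b ≠ u ∧ b <+: v ∧ b ≠ v

/-- A left-border of `(u,v)`: a non-empty proper prefix of `u` that is a proper suffix of `v`. -/
def IsLeftBorder {k : ℕ} (u v b : List (Fin k)) : Prop :=
  b ≠ [] ∧ b <+: u ∧ b ≠ u ∧ b <:+ v ∧ b ≠ v

def MutuallyBordered {k : ℕ} (u v : List (Fin k)) : Prop :=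
  (∃ b, IsRightBorder u v b) ∧ (∃ b, IsLeftBorder u v b)

def MutuallyUnbordered {k : ℕ} (u v : List (Fin k)) : Prop :=
  (¬ ∃ b, IsRightBorder u v b) ∧ (¬ ∃ b, IsLeftBorder u v b)

def RightBordered {k : ℕ} (u v : List (Fin k)) : Prop :=
  (∃ b, IsRightBorder u v b) ∧ (¬ ∃ b, IsLeftBorder u v b)

/-- `lso u v`: the length of the shortest right-border of `(u,v)`, or `0` if there is none. -/
noncomputable def lso {k : ℕ} (u v : List (Fin k)) : ℕ :=
  sInf {m | ∃ b : List (Fin k), IsRightBorder u v b ∧ b.length = m}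

def IsShortestRightBorder {k : ℕ} (u v b : List (Fin k)) : Prop :=
  IsRightBorder u v b ∧ ∀ b', IsRightBorder u v b' → b.length ≤ b'.length

def IsShortestLeftBorder {k : ℕ} (u v b : List (Fin k)) : Prop :=
  IsLeftBorder u v b ∧ ∀ b', IsLeftBorder u v b' → b.length ≤ b'.length

/-- The finite set of all length-`n` words over `Σ_k`. -/
def Words (k n : ℕ) : Finset (List (Fin k)) :=
  (Finset.univ : Finset (Fin n → Fin k)).image List.ofFn

/-- `UB k n`: the number of unbordered words of length `n` over `Σ_k`. -/
noncomputable def UB (k n : ℕ) : ℕ :=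
  ((Words k n).filter Unbordered).card

/-- `M k n`: the number of mutually bordered pairs of length-`n` words over `Σ_k`. -/
noncomputable def M (k n : ℕ) : ℕ :=
  ((Words k n ×ˢ Words k n).filter (fun p => MutuallyBordered p.1 p.2)).card

/-- `R k n`: the number of right-bordered pairs of length-`n` words over `Σ_k`. -/
noncomputable def R (k n : ℕ) : ℕ :=
  ((Words k n ×ˢ Words k n).filter (fun p => RightBordered p.1 p.2)).card

/-- `U k n`: the number of mutually unbordered pairs of length-`n` words over `Σ_k`. -/
noncomputable def U (k n : ℕ) : ℕ :=
  ((Words k n ×ˢ Words k n).filter (fun p => MutuallyUnbordered p.1 p.2)).card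

/-- `G u v m`: the number of unbordered words of length `m` over `Σ_k` having
`u` as a prefix and `v` as a suffix. -/
noncomputable def G {k : ℕ} (u v : List (Fin k)) (m : ℕ) : ℕ :=
  ((Words k m).filter (fun w => Unbordered w ∧ u <+: w ∧ v <:+ w)).card

namespace S11
variable {k : ℕ}

lemma mem_words {n : ℕ} {w : List (Fin k)} : w ∈ Words k n ↔ w.length = n := by
  constructor
  · rintro h
    simp only [Words, Finset.mem_image] at h
    obtain ⟨f, -, rfl⟩ := h
    simp
  · intro h
    subst h
    simp only [Words, Finset.mem_image]
    exact ⟨w.get, Finset.mem_univ _, List.ofFn_get w⟩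

lemma card_words (k n : ℕ) : (Words k n).card = k ^ n := by
  rw [Words, Finset.card_image_of_injective _ List.ofFn_injective, Finset.card_univ]
  simp

lemma prefix_of_le {l₁ l₂ l₃ : List (Fin k)} (h1 : l₁ <+: l₃) (h2 : l₂ <+: l₃)
    (h : l₁.length ≤ l₂.length) : l₁ <+: l₂ := by
  rw [List.prefix_iff_eq_take] at h1 h2
  rw [h1, h2]; exact (List.take_isPrefix_take (l := l₃)).2 (Or.inl h)

lemma suffix_of_le {l₁ l₂ l₃ : List (Fin k)} (h1 : l₁ <:+ l₃) (h2 : l₂ <:+ l₃)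
    (h : l₁.length ≤ l₂.length) : l₁ <:+ l₂ := by
  rw [← List.reverse_prefix] at *
  exact prefix_of_le h1 h2 (by simpa)

lemma isLeftBorder_swap {u v b : List (Fin k)} : IsLeftBorder u v b ↔ IsRightBorder v u b := by
  unfold IsLeftBorder IsRightBorder; tauto

lemma rb_lengths {u v b : List (Fin k)} (h : IsRightBorder u v b) :
    1 ≤ b.length ∧ b.length < u.length ∧ b.length < v.length := by
  obtain ⟨h0, h1, h2, h3, h4⟩ := h
  refine ⟨?_, ?_, ?_⟩
  · cases b with
    | nil => exact absurd rfl h0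
    | cons a l => simp
  · exact lt_of_le_of_ne h1.length_le (fun he => h2 (h1.eq_of_length he))
  · exact lt_of_le_of_ne h3.length_le (fun he => h4 (h3.eq_of_length he))

lemma exists_min_rb {u v : List (Fin k)} (h : ∃ b, IsRightBorder u v b) :
    ∃ b, IsRightBorder u v b ∧ Unbordered b ∧ b.length = lso u v := by
  have hne : {m | ∃ b : List (Fin k), IsRightBorder u v b ∧ b.length = m}.Nonempty := by
    obtain ⟨b, hb⟩ := h; exact ⟨b.length, b, hb, rfl⟩
  obtain ⟨b, hb, hlen⟩ := Nat.sInf_mem hne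
  refine ⟨b, hb, ?_, hlen⟩
  intro d hd
  obtain ⟨hd0, hdb, hd1, hd2⟩ := hd
  have hdl : d.length < b.length :=
    lt_of_le_of_ne hd1.length_le (fun he => hdb (hd1.eq_of_length he))
  have hbl := rb_lengths hb
  have : IsRightBorder u v d := by
    obtain ⟨b0, b1, b2, b3, b4⟩ := hb
    refine ⟨hd0, hd2.trans b1, ?_, hd1.trans b3, ?_⟩
    · intro he; rw [he] at hdl; omega
    · intro he; rw [he] at hdl; omega
  have hle : lso u v ≤ d.length := Nat.sInf_le ⟨d, this, rfl⟩
  have : lso u v = b.length := hlen.symm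
  omega

lemma lso_eq_of_unbordered {u v b : List (Fin k)} (hb : IsRightBorder u v b)
    (hub : Unbordered b) : lso u v = b.length := by
  have hle : lso u v ≤ b.length := Nat.sInf_le ⟨b, hb, rfl⟩
  obtain ⟨b0, hb0, hub0, hlen0⟩ := exists_min_rb ⟨b, hb⟩
  rcases eq_or_lt_of_le hle with he | hlt
  · exact he
  · exfalso
    rw [← hlen0] at hlt
    have hsuf : b0 <:+ b := suffix_of_le hb0.2.1 hb.2.1 (le_of_lt hlt)
    have hpre : b0 <+: b := prefix_of_le hb0.2.2.2.1 hb.2.2.2.1 (le_of_lt hlt)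
    exact hub b0 ⟨hb0.1, fun he => by rw [he] at hlt; omega, hpre, hsuf⟩

lemma fiber_char {u v : List (Fin k)} {i j : ℕ} :
    (MutuallyBordered u v ∧ lso u v = i ∧ lso v u = j) ↔
    ∃ b c : List (Fin k), IsRightBorder u v b ∧ Unbordered b ∧ b.length = i ∧
      IsRightBorder v u c ∧ Unbordered c ∧ c.length = j := by
  constructor
  · rintro ⟨⟨hr, hl⟩, hi, hj⟩
    obtain ⟨b, hb, hub, hbl⟩ := exists_min_rb hr
    obtain ⟨c, hc, huc, hcl⟩ := exists_min_rb (hl.imp fun b => isLeftBorder_swap.mp)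
    exact ⟨b, c, hb, hub, by rw [hbl, hi], hc, huc, by rw [hcl, hj]⟩
  · rintro ⟨b, c, hb, hub, hbl, hc, huc, hcl⟩
    exact ⟨⟨⟨b, hb⟩, ⟨c, isLeftBorder_swap.mpr hc⟩⟩,
      by rw [lso_eq_of_unbordered hb hub, hbl],
      by rw [lso_eq_of_unbordered hc huc, hcl]⟩

lemma decomp {u b c : List (Fin k)} (hc : c <+: u) (hb : b <:+ u)
    (h : c.length + b.length ≤ u.length) : ∃ x, u = c ++ x ++ b := by
  obtain ⟨t, rfl⟩ := hc
  have hbt : b <:+ t := by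
    refine suffix_of_le hb (List.suffix_append c t) ?_
    simp only [List.length_append] at h; omega
  obtain ⟨x, rfl⟩ := hbt
  exact ⟨x, by simp [List.append_assoc]⟩

lemma comp_drop1 {b c x : List (Fin k)} {i j d : ℕ} (hb : b.length = i) (hc : c.length = j)
    (hx : x.length = d) : (c ++ x ++ b).drop (j + d) = b := by
  rw [List.append_assoc, ← List.append_assoc, List.drop_left' (by simp [hc, hx])]

lemma comp_take1 {b c x : List (Fin k)} {j : ℕ} (hc : c.length = j) :
    (c ++ x ++ b).take j = c := by
  rw [List.append_assoc, List.take_left' hc]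

lemma comp_mid {b c x : List (Fin k)} {j d : ℕ} (hc : c.length = j) (hx : x.length = d) :
    ((c ++ x ++ b).drop j).take d = x := by
  rw [List.append_assoc, List.drop_left' hc, List.take_left' hx]

noncomputable def fib (k m i j : ℕ) : Finset (List (Fin k) × List (Fin k)) :=
  ((Words k m ×ˢ Words k m).filter (fun p => MutuallyBordered p.1 p.2)).filter
    (fun p => (lso p.1 p.2, lso p.2 p.1) = (i, j))

lemma mem_fib {m i j : ℕ} {p : List (Fin k) × List (Fin k)} :
    p ∈ fib k m i j ↔ p.1.length = m ∧ p.2.length = m ∧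
      ∃ b c : List (Fin k), IsRightBorder p.1 p.2 b ∧ Unbordered b ∧ b.length = i ∧
        IsRightBorder p.2 p.1 c ∧ Unbordered c ∧ c.length = j := by
  simp only [fib, Finset.mem_filter, Finset.mem_product, mem_words, Prod.mk.injEq]
  constructor
  · rintro ⟨⟨⟨h1, h2⟩, hmb⟩, hli, hlj⟩
    exact ⟨h1, h2, fiber_char.mp ⟨hmb, hli, hlj⟩⟩
  · rintro ⟨h1, h2, hex⟩
    have := fiber_char.mpr hex
    exact ⟨⟨⟨h1, h2⟩, this.1⟩, this.2.1, this.2.2⟩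

lemma fib_decomp {m i j : ℕ} {p : List (Fin k) × List (Fin k)} (hp : p ∈ fib k m i j)
    (hij : i + j ≤ m) :
    ∃ b c x y : List (Fin k), Unbordered b ∧ Unbordered c ∧ b.length = i ∧ c.length = j ∧
      x.length = m - i - j ∧ y.length = m - i - j ∧ p.1 = c ++ x ++ b ∧ p.2 = b ++ y ++ c := by
  obtain ⟨h1, h2, b, c, hb, hub, hbl, hc, huc, hcl⟩ := mem_fib.mp hp
  obtain ⟨x, hx⟩ := decomp hc.2.2.2.1 hb.2.1 (by omega)
  obtain ⟨y, hy⟩ := decomp hb.2.2.2.1 hc.2.1 (by omega)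
  have hxl : x.length = m - i - j := by
    have := congrArg List.length hx; simp at this; omega
  have hyl : y.length = m - i - j := by
    have := congrArg List.length hy; simp at this; omega
  exact ⟨b, c, x, y, hub, huc, hbl, hcl, hxl, hyl, hx, hy⟩

lemma card_fib_eq {m i j : ℕ} (hi : 1 ≤ i) (hj : 1 ≤ j) (hij : i + j ≤ m) :
    (fib k m i j).card = UB k i * (UB k j * (k ^ (m - i - j) * k ^ (m - i - j))) := by
  set d := m - i - j with hd
  have hcard : (((Words k i).filter Unbordered) ×ˢ (((Words k j).filter Unbordered)
      ×ˢ (Words k d ×ˢ Words k d))).card = UB k i * (UB k j * (k ^ d * k ^ d)) := by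
    simp [Finset.card_product, card_words, UB]
  rw [← hcard]
  refine Finset.card_nbij'
    (fun p => (p.1.drop (m - i), (p.1.take j, ((p.1.drop j).take d, (p.2.drop i).take d))))
    (fun q => (q.2.1 ++ q.2.2.1 ++ q.1, q.1 ++ q.2.2.2 ++ q.2.1)) ?_ ?_ ?_ ?_
  · -- forward membership
    intro p hp
    obtain ⟨b, c, x, y, hub, huc, hbl, hcl, hxl, hyl, h1, h2⟩ := fib_decomp hp hij
    have e1 : p.1.drop (m - i) = b := by
      rw [h1, show m - i = j + d by omega, comp_drop1 hbl hcl hxl]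
    have e2 : p.1.take j = c := by rw [h1, comp_take1 hcl]
    have e3 : (p.1.drop j).take d = x := by rw [h1, comp_mid hcl hxl]
    have e4 : (p.2.drop i).take d = y := by rw [h2, comp_mid hbl hyl]
    dsimp only
    rw [e1, e2, e3, e4]
    simp only [Finset.mem_coe, Finset.mem_product, Finset.mem_filter, mem_words]
    exact ⟨⟨hbl, hub⟩, ⟨hcl, huc⟩, hxl, hyl⟩
  · -- backward membership
    rintro ⟨b, c, x, y⟩ hq
    simp only [Finset.mem_coe, Finset.mem_product, Finset.mem_filter, mem_words] at hq
    obtain ⟨⟨hbl, hub⟩, ⟨hcl, huc⟩, hxl, hyl⟩ := hq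
    have hul : (c ++ x ++ b).length = m := by simp [hbl, hcl, hxl]; omega
    have hvl : (b ++ y ++ c).length = m := by simp [hbl, hcl, hyl]; omega
    show (c ++ x ++ b, b ++ y ++ c) ∈ fib k m i j
    rw [mem_fib]
    dsimp only
    refine ⟨hul, hvl, b, c, ?_, hub, hbl, ?_, huc, hcl⟩
    · refine ⟨?_, ?_, ?_, ?_, ?_⟩
      · intro h; rw [h] at hbl; simp at hbl; omega
      · rw [List.append_assoc]; exact (List.suffix_append x b).trans (List.suffix_append c _)
      · intro h; have := congrArg List.length h; rw [hul] at this; omega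
      · rw [List.append_assoc]; exact List.prefix_append b _
      · intro h; have := congrArg List.length h; rw [hvl] at this; omega
    · refine ⟨?_, ?_, ?_, ?_, ?_⟩
      · intro h; rw [h] at hcl; simp at hcl; omega
      · rw [List.append_assoc]; exact (List.suffix_append y c).trans (List.suffix_append b _)
      · intro h; have := congrArg List.length h; rw [hvl] at this; omega
      · rw [List.append_assoc]; exact List.prefix_append c _
      · intro h; have := congrArg List.length h; rw [hul] at this; omega
  · -- left inverse
    intro p hp
    obtain ⟨b, c, x, y, hub, huc, hbl, hcl, hxl, hyl, h1, h2⟩ := fib_decomp hp hij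
    have e1 : p.1.drop (m - i) = b := by
      rw [h1, show m - i = j + d by omega, comp_drop1 hbl hcl hxl]
    have e2 : p.1.take j = c := by rw [h1, comp_take1 hcl]
    have e3 : (p.1.drop j).take d = x := by rw [h1, comp_mid hcl hxl]
    have e4 : (p.2.drop i).take d = y := by rw [h2, comp_mid hbl hyl]
    dsimp only
    rw [e1, e2, e3, e4]
    exact Prod.ext (by rw [h1]) (by rw [h2])
  · -- right inverse
    rintro ⟨b, c, x, y⟩ hq
    simp only [Finset.mem_coe, Finset.mem_product, Finset.mem_filter, mem_words] at hq
    obtain ⟨⟨hbl, hub⟩, ⟨hcl, huc⟩, hxl, hyl⟩ := hq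
    dsimp only
    rw [show m - i = j + d by omega, comp_drop1 hbl hcl hxl, comp_take1 hcl,
      comp_mid hcl hxl, comp_mid hbl hyl]

lemma card_fib_le {m i j : ℕ} (hij : m ≤ i + j) : (fib k m i j).card ≤ k ^ m := by
  rw [← card_words k m]
  refine Finset.card_le_card_of_injOn Prod.fst (fun p hp => mem_words.mpr (mem_fib.mp hp).1) ?_
  intro p hp q hq hfst
  simp only [Finset.mem_coe] at hp hq
  obtain ⟨h1, h2, b, c, hb, hub, hbl, hc, huc, hcl⟩ := mem_fib.mp hp
  obtain ⟨h1', h2', b', c', hb', hub', hbl', hc', huc', hcl'⟩ := mem_fib.mp hq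
  have ebb : b = b' := by
    have e1 : b = p.1.drop (p.1.length - b.length) := List.suffix_iff_eq_drop.mp hb.2.1
    have e2 : b' = q.1.drop (q.1.length - b'.length) := List.suffix_iff_eq_drop.mp hb'.2.1
    rw [e1, e2, hfst, hbl, hbl', h1']
  have ecc : c = c' := by
    have e1 : c = p.1.take c.length := List.prefix_iff_eq_take.mp hc.2.2.2.1
    have e2 : c' = q.1.take c'.length := List.prefix_iff_eq_take.mp hc'.2.2.2.1
    rw [e1, e2, hfst, hcl, hcl']
  have key : ∀ w : List (Fin k) × List (Fin k), w ∈ fib k m i j →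
      ∀ b₀ c₀ : List (Fin k), IsRightBorder w.1 w.2 b₀ → b₀.length = i →
      IsRightBorder w.2 w.1 c₀ → c₀.length = j →
      w.2 = b₀ ++ c₀.drop (j - (m - i)) := by
    intro w hw b₀ c₀ hb₀ hbl₀ hc₀ hcl₀
    obtain ⟨hw1, hw2, -⟩ := mem_fib.mp hw
    have e3 : w.2.take i = b₀ := by
      have := List.prefix_iff_eq_take.mp hb₀.2.2.2.1
      rw [← hbl₀]; exact this.symm
    have hwlen : (w.2.drop i).length = m - i := by simp [hw2]
    have hsuf : w.2.drop i <:+ c₀ := by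
      refine suffix_of_le (List.drop_suffix i w.2) hc₀.2.1 ?_
      rw [hwlen, hcl₀]; omega
    have e4 : w.2.drop i = c₀.drop (c₀.length - (w.2.drop i).length) :=
      List.suffix_iff_eq_drop.mp hsuf
    calc w.2 = w.2.take i ++ w.2.drop i := (List.take_append_drop i w.2).symm
      _ = b₀ ++ c₀.drop (j - (m - i)) := by
          rw [e3, e4, hwlen, hcl₀]
  have hv := key p hp b c hb hbl hc hcl
  have hv' := key q hq b' c' hb' hbl' hc' hcl'
  refine Prod.ext hfst ?_
  rw [hv, hv', ebb, ecc]

lemma M_eq_sum (k m : ℕ) :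
    M k m = ∑ q ∈ (Icc 1 (m-1)) ×ˢ (Icc 1 (m-1)), (fib k m q.1 q.2).card := by
  rw [M, Finset.card_eq_sum_card_fiberwise (f := fun p => (lso p.1 p.2, lso p.2 p.1))
    (t := (Icc 1 (m-1)) ×ˢ (Icc 1 (m-1))) ?_]
  · exact Finset.sum_congr rfl fun q hq => rfl
  · intro p hp
    simp only [Finset.mem_coe, Finset.mem_filter, Finset.mem_product, mem_words] at hp
    obtain ⟨⟨h1, h2⟩, hr, hl⟩ := hp
    obtain ⟨b, hb, -, hbl⟩ := exists_min_rb hr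
    obtain ⟨c, hc, -, hcl⟩ := exists_min_rb (hl.imp fun b => isLeftBorder_swap.mp)
    have hbL := rb_lengths hb
    have hcL := rb_lengths hc
    simp only [Finset.mem_coe, Finset.mem_product, Finset.mem_Icc]
    omega

noncomputable def expr (k m : ℕ) (q : ℕ × ℕ) : ℕ :=
  UB k q.1 * (UB k q.2 * (k ^ (m - q.1 - q.2) * k ^ (m - q.1 - q.2)))

lemma M_lower_nat (k m h : ℕ) (h1 : 1 ≤ h) (hm : 2 * h ≤ m) :
    ∑ q ∈ Icc 1 h ×ˢ Icc 1 h, expr k m q ≤ M k m := by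
  rw [M_eq_sum]
  calc ∑ q ∈ Icc 1 h ×ˢ Icc 1 h, expr k m q
      = ∑ q ∈ Icc 1 h ×ˢ Icc 1 h, (fib k m q.1 q.2).card := by
        refine Finset.sum_congr rfl fun q hq => ?_
        simp only [Finset.mem_product, Finset.mem_Icc] at hq
        exact (card_fib_eq hq.1.1 hq.2.1 (by omega)).symm
    _ ≤ ∑ q ∈ Icc 1 (m-1) ×ˢ Icc 1 (m-1), (fib k m q.1 q.2).card := by
        apply Finset.sum_le_sum_of_subset
        exact Finset.product_subset_product (Finset.Icc_subset_Icc le_rfl (by omega))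
          (Finset.Icc_subset_Icc le_rfl (by omega))

lemma M_upper_nat (k m : ℕ) :
    M k m ≤ (∑ q ∈ ((Icc 1 (m-1)) ×ˢ (Icc 1 (m-1))).filter (fun q => q.1 + q.2 ≤ m),
      expr k m q) + m ^ 2 * k ^ m := by
  rw [M_eq_sum,
    ← Finset.sum_filter_add_sum_filter_not ((Icc 1 (m-1)) ×ˢ (Icc 1 (m-1)))
      (fun q => q.1 + q.2 ≤ m)]
  refine Nat.add_le_add ?_ ?_
  · refine le_of_eq (Finset.sum_congr rfl fun q hq => ?_)
    simp only [Finset.mem_filter, Finset.mem_product, Finset.mem_Icc] at hq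
    exact card_fib_eq hq.1.1.1 hq.1.2.1 hq.2
  · calc ∑ q ∈ ((Icc 1 (m-1)) ×ˢ (Icc 1 (m-1))).filter (fun q => ¬ q.1 + q.2 ≤ m),
        (fib k m q.1 q.2).card
        ≤ ∑ _q ∈ ((Icc 1 (m-1)) ×ˢ (Icc 1 (m-1))).filter (fun q => ¬ q.1 + q.2 ≤ m), k ^ m := by
          refine Finset.sum_le_sum fun q hq => ?_
          simp only [Finset.mem_filter] at hq
          exact card_fib_le (by omega)
      _ ≤ m ^ 2 * k ^ m := by
          rw [Finset.sum_const, smul_eq_mul]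
          refine Nat.mul_le_mul_right _ ?_
          calc (((Icc 1 (m-1)) ×ˢ (Icc 1 (m-1))).filter (fun q => ¬ q.1 + q.2 ≤ m)).card
              ≤ ((Icc 1 (m-1)) ×ˢ (Icc 1 (m-1))).card := Finset.card_filter_le _ _
            _ ≤ m ^ 2 := by
                rw [Finset.card_product, Nat.card_Icc]
                have h1 : m - 1 + 1 - 1 ≤ m := by omega
                calc (m - 1 + 1 - 1) * (m - 1 + 1 - 1) ≤ m * m := Nat.mul_le_mul h1 h1
                  _ = m ^ 2 := (sq m).symm

noncomputable def Sf (k n : ℕ) : ℝ := ∑ i ∈ Icc 1 n, (UB k i : ℝ) / (k : ℝ) ^ (2 * i)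

lemma Icc_one_eq_Ioc (x : ℕ) : Icc 1 x = Ioc 0 x := by
  ext t; simp [Finset.mem_Icc, Finset.mem_Ioc]; omega

lemma UB_le (k i : ℕ) : UB k i ≤ k ^ i := by
  rw [UB, ← card_words k i]; exact Finset.card_filter_le _ _

section Real
variable {k : ℕ} (hk : 2 ≤ k)
include hk

lemma kR : (2:ℝ) ≤ (k:ℝ) := by exact_mod_cast hk

lemma kpos : (0:ℝ) < (k:ℝ) := by linarith [kR hk]

lemma kne : (k:ℝ) ≠ 0 := ne_of_gt (kpos hk)

lemma km1pos : (0:ℝ) < (k:ℝ) - 1 := by linarith [kR hk]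

lemma term_eq {i j m : ℕ} (hij : i + j ≤ m) :
    ((expr k m (i, j) : ℕ) : ℝ) / (k : ℝ) ^ (2 * m)
      = ((UB k i : ℝ) / (k : ℝ) ^ (2 * i)) * ((UB k j : ℝ) / (k : ℝ) ^ (2 * j)) := by
  have hkne : (k:ℝ) ≠ 0 := kne hk
  set d := m - i - j with hd
  have h2 : 2 * m = 2 * i + (2 * j + (d + d)) := by omega
  rw [expr, h2]
  push_cast
  rw [pow_add, pow_add, pow_add]
  field_simp
  ring

lemma geom_range_le (t : ℕ) : ∑ i ∈ Finset.range t, ((1:ℝ)/k) ^ i ≤ (1 - (1:ℝ)/k)⁻¹ := by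
  have hk2 := kR hk
  have h0 : (0:ℝ) ≤ 1/k := by positivity
  have h1 : (1:ℝ)/k < 1 := by rw [div_lt_one (by linarith)]; linarith
  rw [← tsum_geometric_of_lt_one h0 h1]
  exact Summable.sum_le_tsum _ (fun i _ => by positivity) (summable_geometric_of_lt_one h0 h1)

lemma geom_tail {n m : ℕ} (hnm : n ≤ m) :
    ∑ i ∈ Icc (n+1) m, ((1:ℝ)/k) ^ i ≤ (1/(k:ℝ)) ^ n / ((k:ℝ) - 1) := by
  have hk2 := kR hk
  have hkne := kne hk
  have hm1 := km1pos hk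
  have hne1 : (k:ℝ) - 1 ≠ 0 := ne_of_gt hm1
  rw [← Finset.Ico_add_one_right_eq_Icc, Finset.sum_Ico_eq_sum_range]
  have hrw : ∀ i : ℕ, ((1:ℝ)/k) ^ (n + 1 + i) = ((1:ℝ)/k) ^ (n+1) * ((1:ℝ)/k) ^ i := by
    intro i; rw [pow_add]
  rw [Finset.sum_congr rfl fun i _ => hrw i, ← Finset.mul_sum]
  have hle := geom_range_le hk (m + 1 - (n + 1))
  have hpos : (0:ℝ) ≤ ((1:ℝ)/k) ^ (n+1) := by positivity
  have e0 : 1 - 1/(k:ℝ) = ((k:ℝ) - 1)/k := by field_simp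
  calc ((1:ℝ)/k) ^ (n+1) * ∑ i ∈ Finset.range (m + 1 - (n+1)), ((1:ℝ)/k) ^ i
      ≤ ((1:ℝ)/k) ^ (n+1) * (1 - (1:ℝ)/k)⁻¹ := mul_le_mul_of_nonneg_left hle hpos
    _ = (1/(k:ℝ)) ^ n / ((k:ℝ) - 1) := by
        rw [pow_succ, e0, inv_div]
        field_simp

lemma term_le (i : ℕ) : (UB k i : ℝ) / (k : ℝ) ^ (2 * i) ≤ ((1:ℝ)/k) ^ i := by
  have hkne : (k:ℝ) ≠ 0 := kne hk
  have hkpos : (0:ℝ) < (k:ℝ) := kpos hk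
  have hub : (UB k i : ℝ) ≤ (k:ℝ) ^ i := by exact_mod_cast UB_le k i
  have e1 : ((1:ℝ)/k) ^ i = 1/(k:ℝ)^i := by rw [div_pow, one_pow]
  calc (UB k i : ℝ) / (k : ℝ) ^ (2 * i) ≤ (k:ℝ)^i / (k : ℝ) ^ (2 * i) := by gcongr
    _ = ((1:ℝ)/k) ^ i := by
        rw [e1, two_mul, pow_add]
        field_simp

lemma Sf_mono : Monotone (Sf k) := by
  intro a b hab
  refine Finset.sum_le_sum_of_subset_of_nonneg (Finset.Icc_subset_Icc le_rfl hab) ?_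
  intro i _ _; positivity

lemma Sf_nonneg (n : ℕ) : 0 ≤ Sf k n :=
  Finset.sum_nonneg fun i _ => by positivity

lemma Sf_tail {n m : ℕ} (hnm : n ≤ m) :
    Sf k m ≤ Sf k n + (1/(k:ℝ)) ^ n / ((k:ℝ) - 1) := by
  have hsplit : Sf k n + ∑ i ∈ Icc (n+1) m, (UB k i : ℝ) / (k : ℝ) ^ (2 * i) = Sf k m := by
    rw [Sf, Sf, Icc_one_eq_Ioc, Icc_one_eq_Ioc, show Icc (n+1) m = Ioc n m from
      by rw [← Finset.Icc_add_one_left_eq_Ioc]]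
    exact Finset.sum_Ioc_consecutive _ (Nat.zero_le n) hnm
  rw [← hsplit]
  refine add_le_add le_rfl ?_
  calc ∑ i ∈ Icc (n+1) m, (UB k i : ℝ) / (k : ℝ) ^ (2 * i)
      ≤ ∑ i ∈ Icc (n+1) m, ((1:ℝ)/k) ^ i := Finset.sum_le_sum fun i _ => term_le hk i
    _ ≤ (1/(k:ℝ)) ^ n / ((k:ℝ) - 1) := geom_tail hk hnm

lemma Sf_bdd (n : ℕ) : Sf k n ≤ 1 / ((k:ℝ) - 1) := by
  have h := Sf_tail hk (Nat.zero_le n)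
  have h0 : Sf k 0 = 0 := by simp [Sf]
  rw [h0, zero_add, pow_zero] at h
  exact h

lemma lower_real {h m : ℕ} (h1 : 1 ≤ h) (hm : 2 * h ≤ m) :
    Sf k h ^ 2 ≤ (M k m : ℝ) / (k : ℝ) ^ (2 * m) := by
  have hkne : (k:ℝ) ≠ 0 := kne hk
  have e : Sf k h ^ 2 = ∑ q ∈ Icc 1 h ×ˢ Icc 1 h, ((expr k m q : ℕ) : ℝ) / (k : ℝ) ^ (2 * m) := by
    rw [sq, Sf, Finset.sum_mul_sum, ← Finset.sum_product']
    refine Finset.sum_congr rfl fun q hq => ?_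
    simp only [Finset.mem_product, Finset.mem_Icc] at hq
    exact (term_eq hk (m := m) (i := q.1) (j := q.2) (by omega)).symm
  rw [e, ← Finset.sum_div, ← Nat.cast_sum]
  have hnum : ((∑ q ∈ Icc 1 h ×ˢ Icc 1 h, expr k m q : ℕ) : ℝ) ≤ (M k m : ℝ) := by
    exact_mod_cast M_lower_nat k m h h1 hm
  gcongr

lemma upper_real (m : ℕ) :
    (M k m : ℝ) / (k : ℝ) ^ (2 * m) ≤ Sf k m ^ 2 + (m:ℝ) ^ 2 * ((1:ℝ)/k) ^ m := by
  have hkne : (k:ℝ) ≠ 0 := kne hk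
  have hkpos : (0:ℝ) < (k:ℝ) := kpos hk
  have hp : (0:ℝ) < (k : ℝ) ^ (2 * m) := by positivity
  set T1 := ((Icc 1 (m-1)) ×ˢ (Icc 1 (m-1))).filter (fun q => q.1 + q.2 ≤ m) with hT1
  have step1 : (M k m : ℝ) / (k : ℝ) ^ (2 * m)
      ≤ (((∑ q ∈ T1, expr k m q) + m ^ 2 * k ^ m : ℕ) : ℝ) / (k : ℝ) ^ (2 * m) := by
    gcongr
    exact_mod_cast M_upper_nat k m
  refine step1.trans ?_
  push_cast
  rw [add_div]
  refine add_le_add ?_ (le_of_eq ?_)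
  · rw [Finset.sum_div]
    calc ∑ q ∈ T1, ((expr k m q : ℕ) : ℝ) / (k : ℝ) ^ (2 * m)
        = ∑ q ∈ T1, ((UB k q.1 : ℝ) / (k : ℝ) ^ (2 * q.1)) * ((UB k q.2 : ℝ) / (k : ℝ) ^ (2 * q.2)) := by
          refine Finset.sum_congr rfl fun q hq => ?_
          rw [hT1, Finset.mem_filter] at hq
          exact term_eq hk (m := m) (i := q.1) (j := q.2) hq.2
      _ ≤ ∑ q ∈ Icc 1 m ×ˢ Icc 1 m,
            ((UB k q.1 : ℝ) / (k : ℝ) ^ (2 * q.1)) * ((UB k q.2 : ℝ) / (k : ℝ) ^ (2 * q.2)) := by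
          refine Finset.sum_le_sum_of_subset_of_nonneg ?_ fun q _ _ => by positivity
          refine (Finset.filter_subset _ _).trans ?_
          exact Finset.product_subset_product (Finset.Icc_subset_Icc le_rfl (by omega))
            (Finset.Icc_subset_Icc le_rfl (by omega))
      _ = Sf k m ^ 2 := by rw [sq, Sf, Finset.sum_mul_sum, ← Finset.sum_product']
  · have e1 : ((1:ℝ)/k) ^ m = 1/(k:ℝ)^m := by rw [div_pow, one_pow]
    rw [e1, two_mul, pow_add]
    field_simp

end Real

end S11

theorem stmt11 (k : ℕ) (hk : 2 ≤ k) :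
    ∃ L : ℝ,
      Filter.Tendsto (fun n : ℕ => (M k n : ℝ) / (k : ℝ) ^ (2 * n)) Filter.atTop (nhds L) ∧
      ∀ n : ℕ, 1 ≤ n →
        (∑ i ∈ Finset.Icc 1 n, (UB k i : ℝ) / (k : ℝ) ^ (2 * i)) ^ 2 ≤ L ∧
        L ≤ ((∑ i ∈ Finset.Icc 1 n, (UB k i : ℝ) / (k : ℝ) ^ (2 * i)) +
              (1 / (k : ℝ) ^ n) / ((k : ℝ) - 1)) ^ 2 := by
  have hbdd : BddAbove (Set.range (S11.Sf k)) :=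
    ⟨1/((k:ℝ)-1), by rintro x ⟨n, rfl⟩; exact S11.Sf_bdd hk n⟩
  set S := ⨆ n, S11.Sf k n with hS
  have htend : Tendsto (S11.Sf k) atTop (nhds S) := tendsto_atTop_ciSup (S11.Sf_mono hk) hbdd
  have hdiv : Tendsto (fun m : ℕ => m / 2) atTop atTop := by
    apply Filter.tendsto_atTop_atTop.2
    intro b; exact ⟨2*b, fun m hm => by omega⟩
  have hlow : Tendsto (fun m : ℕ => S11.Sf k (m/2) ^ 2) atTop (nhds (S ^ 2)) :=
    (htend.comp hdiv).pow 2
  have hk1 : ‖(1:ℝ)/(k:ℝ)‖ < 1 := by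
    rw [Real.norm_eq_abs, abs_of_nonneg (by positivity)]
    rw [div_lt_one (S11.kpos hk)]; linarith [S11.kR hk]
  have hzero : Tendsto (fun m : ℕ => (m:ℝ)^2 * ((1:ℝ)/k)^m) atTop (nhds 0) :=
    (summable_pow_mul_geometric_of_norm_lt_one 2 hk1).tendsto_atTop_zero
  have hhigh : Tendsto (fun m : ℕ => S11.Sf k m ^ 2 + (m:ℝ)^2 * ((1:ℝ)/k)^m)
      atTop (nhds (S^2 + 0)) := (htend.pow 2).add hzero
  rw [add_zero] at hhigh
  have haux : Tendsto (fun m : ℕ => (M k m : ℝ)/(k:ℝ)^(2*m)) atTop (nhds (S^2)) := by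
    refine tendsto_of_tendsto_of_tendsto_of_le_of_le' hlow hhigh ?_ ?_
    · filter_upwards [Filter.eventually_ge_atTop 2] with m hm
      exact S11.lower_real hk (by omega) (by omega)
    · exact Filter.Eventually.of_forall fun m => S11.upper_real hk m
  refine ⟨S^2, haux, fun n hn => ?_⟩
  have hSn : (∑ i ∈ Finset.Icc 1 n, (UB k i : ℝ)/(k:ℝ)^(2*i)) = S11.Sf k n := rfl
  rw [hSn]
  constructor
  · have h1 : S11.Sf k n ≤ S := le_ciSup hbdd n
    exact pow_le_pow_left₀ (S11.Sf_nonneg hk n) h1 2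
  · have h0 : 0 ≤ S := le_trans (S11.Sf_nonneg hk 0) (le_ciSup hbdd 0)
    have h2 : S ≤ S11.Sf k n + (1/(k:ℝ)^n)/((k:ℝ)-1) := by
      refine ciSup_le fun m => ?_
      rcases le_total m n with h | h
      · refine (S11.Sf_mono hk h).trans ?_
        have hnn : 0 ≤ (1/(k:ℝ)^n)/((k:ℝ)-1) :=
          div_nonneg (by positivity) (le_of_lt (S11.km1pos hk))
        linarith
      · have h3 := S11.Sf_tail hk h
        rwa [show (1/(k:ℝ))^n = 1/(k:ℝ)^n from by rw [div_pow, one_pow]] at h3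
    exact pow_le_pow_left₀ h0 h2 2
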